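/- Let p > 0 be a real number and B a real normed vector space. For any x, y ∈ B, one has ∫_0^1 (1 − α) ‖x + α y‖^p dα ≥ 3^{−(1+p)} ‖x‖^p. -/

import Mathlib

lemma integral_one_sub_mul_const (C a b : ℝ) :
    ∫ α in a..b, (1 - α) * C = ((b - b^2/2) - (a - a^2/2)) * C := by
  rw [intervalIntegral.integral_mul_const]
  have h : (∫ α in a..b, (1 - α)) = (∫ _ in a..b, (1:ℝ)) - ∫ α in a..b, α :=
    intervalIntegral.integral_sub intervalIntegrable_const
      (continuous_id.intervalIntegrable a b)
  rw [h, intervalIntegral.integral_const, integral_id]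
  simp only [smul_eq_mul, mul_one]
  ring

lemma norm_lower_bound1 {B : Type*} [NormedAddCommGroup B] [NormedSpace ℝ B]
    (x y : B) (α : ℝ) (hα : 0 ≤ α) : ‖x‖ - α * ‖y‖ ≤ ‖x + α • y‖ := by
  have h1 : ‖x‖ ≤ ‖x + α • y‖ + ‖α • y‖ := by
    simpa using norm_add_le (x + α • y) (-(α • y))
  rw [norm_smul, Real.norm_eq_abs, abs_of_nonneg hα] at h1
  linarith

lemma norm_lower_bound2 {B : Type*} [NormedAddCommGroup B] [NormedSpace ℝ B]
    (x y : B) (α : ℝ) (hα : 0 ≤ α) : α * ‖y‖ - ‖x‖ ≤ ‖x + α • y‖ := by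
  have h1 : ‖α • y‖ ≤ ‖x + α • y‖ + ‖x‖ := by
    have := norm_add_le (x + α • y) (-x)
    simpa [add_comm] using this
  rw [norm_smul, Real.norm_eq_abs, abs_of_nonneg hα] at h1
  linarith

set_option maxHeartbeats 1000000 in
theorem integral_segment_rpow_lower_bound
    (p : ℝ) (hp : 0 < p)
    {B : Type*} [NormedAddCommGroup B] [NormedSpace ℝ B]
    (x y : B) :
    (3 : ℝ) ^ (-(1 + p)) * ‖x‖ ^ p ≤ ∫ α in (0:ℝ)..1, (1 - α) * ‖x + α • y‖ ^ p := by
  have hs0 : (0:ℝ) ≤ ‖x‖ := norm_nonneg x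
  have ht0 : (0:ℝ) ≤ ‖y‖ := norm_nonneg y
  have hcont : Continuous fun α : ℝ => (1 - α) * ‖x + α • y‖ ^ p := by
    apply Continuous.mul (by continuity)
    exact Continuous.rpow_const (by continuity) (fun _ => Or.inr hp.le)
  have hint : ∀ a b : ℝ, IntervalIntegrable (fun α : ℝ => (1 - α) * ‖x + α • y‖ ^ p)
      MeasureTheory.volume a b := fun a b => hcont.intervalIntegrable a b
  have hK : (3:ℝ) ^ (-(1+p)) * ‖x‖ ^ p = (1/3) * (‖x‖/3) ^ p := by
    rw [Real.div_rpow hs0 (by norm_num), Real.rpow_neg (by norm_num),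
      Real.rpow_add (by norm_num : (0:ℝ) < 3), Real.rpow_one]
    have h3 : (3:ℝ) ^ p ≠ 0 := (Real.rpow_pos_of_pos (by norm_num) p).ne'
    field_simp
  have hKnn : (0:ℝ) ≤ (‖x‖/3) ^ p := Real.rpow_nonneg (by positivity) p
  rcases eq_or_lt_of_le ht0 with h0 | htpos
  · -- y = 0
    have hy : y = 0 := norm_eq_zero.mp h0.symm
    subst hy
    simp only [smul_zero, add_zero]
    rw [integral_one_sub_mul_const]
    rw [hK]
    have hle : (‖x‖/3) ^ p ≤ ‖x‖ ^ p :=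
      Real.rpow_le_rpow (by positivity) (by linarith) hp.le
    nlinarith [Real.rpow_nonneg hs0 p]
  · -- ‖y‖ > 0
    set s := ‖x‖ with hs
    set t := ‖y‖ with ht
    set u := s / t with hu
    have hu0 : 0 ≤ u := div_nonneg hs0 htpos.le
    set c1 := min (2*u/3) 1 with hc1
    set c2 := min (4*u/3) 1 with hc2
    have hc10 : 0 ≤ c1 := le_min (by positivity) (by norm_num)
    have hc11 : c1 ≤ 1 := min_le_right _ _
    have hc12 : c1 ≤ c2 := min_le_min (by linarith) le_rfl
    have hc21 : c2 ≤ 1 := min_le_right _ _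
    -- pointwise bound on [0, c1]
    have hpt1 : ∀ α ∈ Set.Icc (0:ℝ) c1,
        (1 - α) * (s/3) ^ p ≤ (1 - α) * ‖x + α • y‖ ^ p := by
      rintro α ⟨hα0, hα1⟩
      have hαt : α * t ≤ 2*s/3 := by
        have : α ≤ 2*u/3 := le_trans hα1 (min_le_left _ _)
        calc α * t ≤ (2*u/3) * t := by nlinarith
          _ = 2*s/3 := by rw [hu]; field_simp
      have hn : s/3 ≤ ‖x + α • y‖ := by
        have := norm_lower_bound1 x y α hα0
        rw [← hs, ← ht] at this
        linarith
      exact mul_le_mul_of_nonneg_left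
        (Real.rpow_le_rpow (by positivity) hn hp.le) (by linarith)
    -- pointwise bound on [c2, 1]
    have hpt2 : ∀ α ∈ Set.Icc c2 (1:ℝ),
        (1 - α) * (s/3) ^ p ≤ (1 - α) * ‖x + α • y‖ ^ p := by
      rintro α ⟨hα0, hα1⟩
      rcases eq_or_lt_of_le hα1 with rfl | hαlt
      · simp
      · have hc2lt : c2 < 1 := lt_of_le_of_lt hα0 hαlt
        have hc2eq : c2 = 4*u/3 := by
          rcases min_cases (4*u/3) (1:ℝ) with ⟨h, _⟩ | ⟨h, _⟩
          · rw [hc2, h]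
          · exfalso; rw [hc2, h] at hc2lt; exact lt_irrefl 1 hc2lt
        have hαt : 4*s/3 ≤ α * t := by
          have hα4 : 4*u/3 ≤ α := hc2eq ▸ hα0
          calc 4*s/3 = (4*u/3) * t := by rw [hu]; field_simp
            _ ≤ α * t := by nlinarith
        have hn : s/3 ≤ ‖x + α • y‖ := by
          have := norm_lower_bound2 x y α (by linarith)
          rw [← hs, ← ht] at this
          linarith
        exact mul_le_mul_of_nonneg_left
          (Real.rpow_le_rpow (by positivity) hn hp.le) (by linarith)
    -- split the integral
    have hsplit : (∫ α in (0:ℝ)..1, (1 - α) * ‖x + α • y‖ ^ p)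
        = (∫ α in (0:ℝ)..c1, (1 - α) * ‖x + α • y‖ ^ p)
        + (∫ α in c1..c2, (1 - α) * ‖x + α • y‖ ^ p)
        + (∫ α in c2..(1:ℝ), (1 - α) * ‖x + α • y‖ ^ p) := by
      rw [intervalIntegral.integral_add_adjacent_intervals (hint 0 c1) (hint c1 c2),
        intervalIntegral.integral_add_adjacent_intervals (hint 0 c2) (hint c2 1)]
    have hmid : 0 ≤ ∫ α in c1..c2, (1 - α) * ‖x + α • y‖ ^ p := by
      apply intervalIntegral.integral_nonneg hc12
      rintro α ⟨hα0, hα1⟩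
      have : α ≤ 1 := le_trans hα1 hc21
      have := Real.rpow_nonneg (norm_nonneg (x + α • y)) p
      nlinarith
    have hcg : Continuous fun α : ℝ => (1 - α) * (s/3) ^ p :=
      (continuous_const.sub continuous_id).mul continuous_const
    have hA : (∫ α in (0:ℝ)..c1, (1 - α) * (s/3) ^ p)
        ≤ ∫ α in (0:ℝ)..c1, (1 - α) * ‖x + α • y‖ ^ p :=
      intervalIntegral.integral_mono_on hc10
        (hcg.intervalIntegrable 0 c1) (hint 0 c1) hpt1
    have hC : (∫ α in c2..(1:ℝ), (1 - α) * (s/3) ^ p)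
        ≤ ∫ α in c2..(1:ℝ), (1 - α) * ‖x + α • y‖ ^ p :=
      intervalIntegral.integral_mono_on hc21
        (hcg.intervalIntegrable c2 1) (hint c2 1) hpt2
    -- the weight inequality
    have hW : (1:ℝ)/3 ≤ (c1 - c1^2/2) + ((1 - 1^2/2) - (c2 - c2^2/2)) := by
      rcases le_or_gt (4*u/3) (1:ℝ) with h4 | h4
      · have hc2eq : c2 = 4*u/3 := by rw [hc2, min_eq_left h4]
        have hc1eq : c1 = 2*u/3 := by
          rw [hc1, min_eq_left (by linarith)]
        rw [hc1eq, hc2eq]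
        nlinarith [sq_nonneg (u - 1/2)]
      · have hc2eq : c2 = 1 := by rw [hc2, min_eq_right h4.le]
        rcases le_or_gt (2*u/3) (1:ℝ) with h2 | h2
        · have hc1eq : c1 = 2*u/3 := by rw [hc1, min_eq_left h2]
          rw [hc1eq, hc2eq]
          nlinarith [mul_nonneg (by linarith : (0:ℝ) ≤ u - 3/4)
            (by linarith : (0:ℝ) ≤ 3/2 - u)]
        · have hc1eq : c1 = 1 := by rw [hc1, min_eq_right h2.le]
          rw [hc1eq, hc2eq]; norm_num
    calc (3:ℝ) ^ (-(1+p)) * s ^ p = (1/3) * (s/3) ^ p := hK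
      _ ≤ ((c1 - c1^2/2) + ((1 - 1^2/2) - (c2 - c2^2/2))) * (s/3) ^ p :=
          mul_le_mul_of_nonneg_right hW hKnn
      _ = (∫ α in (0:ℝ)..c1, (1 - α) * (s/3) ^ p)
          + (∫ α in c2..(1:ℝ), (1 - α) * (s/3) ^ p) := by
          rw [integral_one_sub_mul_const, integral_one_sub_mul_const]; ring
      _ ≤ (∫ α in (0:ℝ)..c1, (1 - α) * ‖x + α • y‖ ^ p)
          + (∫ α in c2..(1:ℝ), (1 - α) * ‖x + α • y‖ ^ p) := add_le_add hA hC
      _ ≤ ∫ α in (0:ℝ)..1, (1 - α) * ‖x + α • y‖ ^ p := by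
          rw [hsplit]; linarith
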